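/- Let m be a nonnegative integer and k = 4m+3. In the triangular chocolate bar game with move function movek, a position (x,y,z) with y ≤ ⌊(x+z)/k⌋ is a P-position if and only if x ⊕ y ⊕ z = 0. Equivalently, A_k is exactly the set of P-positions and B_k is exactly the set of N-positions of this game. -/

import Mathlib

/-- The set of positions reachable in one move from (x, y, z) in the
triangular chocolate bar game. -/
def movek (k : ℕ) (p : ℕ × ℕ × ℕ) : Set (ℕ × ℕ × ℕ) :=
  {q | (∃ u < p.1, q = (u, p.2.1, p.2.2)) ∨
       (∃ v < p.2.1, q = (p.1, v, p.2.2)) ∨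
       (∃ w < p.2.2, q = (p.1, p.2.1, w)) ∨
       (∃ u < p.1, q = (u, min p.2.1 ((u + p.2.2) / k), p.2.2)) ∨
       (∃ w < p.2.2, q = (p.1, min p.2.1 ((p.1 + w) / k), w))}

/-- Every move strictly decreases the coordinate sum. -/
lemma movek_sum_lt (k : ℕ) (p q : ℕ × ℕ × ℕ) (h : q ∈ movek k p) :
    q.1 + q.2.1 + q.2.2 < p.1 + p.2.1 + p.2.2 := by
  obtain ⟨x, y, z⟩ := p
  simp only [movek, Set.mem_setOf_eq] at h
  rcases h with ⟨u, hu, rfl⟩ | ⟨v, hv, rfl⟩ | ⟨w, hw, rfl⟩ | ⟨u, hu, rfl⟩ | ⟨w, hw, rfl⟩ <;>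
    simp <;> omega

/-- p is a P-position iff no move from p leads to a P-position
(well-founded recursion on the coordinate sum). -/
def PPosition (k : ℕ) (p : ℕ × ℕ × ℕ) : Prop :=
  ∀ q ∈ movek k p, ¬ PPosition k q
termination_by p.1 + p.2.1 + p.2.2
decreasing_by exact movek_sum_lt k p q (by assumption)

/-- A_k = { (x,y,z) : y ≤ ⌊(x+z)/k⌋ and x ⊕ y ⊕ z = 0 }. -/
def Ak (k : ℕ) : Set (ℕ × ℕ × ℕ) :=
  {p | p.2.1 ≤ (p.1 + p.2.2) / k ∧ p.1 ^^^ p.2.1 ^^^ p.2.2 = 0}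

/-- B_k = { (x,y,z) : y ≤ ⌊(x+z)/k⌋ and x ⊕ y ⊕ z ≠ 0 }. -/
def Bk (k : ℕ) : Set (ℕ × ℕ × ℕ) :=
  {p | p.2.1 ≤ (p.1 + p.2.2) / k ∧ p.1 ^^^ p.2.1 ^^^ p.2.2 ≠ 0}

/- ### Auxiliary lemmas -/

lemma PP_iff' (k : ℕ) (p : ℕ × ℕ × ℕ) :
    PPosition k p ↔ ∀ q ∈ movek k p, ¬ PPosition k q := by
  rw [PPosition]

lemma xor_two_mul_add' (a b i j : ℕ) (hi : i < 2) (hj : j < 2) :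
    (2*a+i) ^^^ (2*b+j) = 2*(a^^^b) + (i^^^j) := by
  interval_cases i <;> interval_cases j
  · simpa [Nat.bit_val] using Nat.xor_bit false a false b
  · simpa [Nat.bit_val] using Nat.xor_bit false a true b
  · simpa [Nat.bit_val] using Nat.xor_bit true a false b
  · simpa [Nat.bit_val] using Nat.xor_bit true a true b

lemma xor_bits' (i j : ℕ) (hi : i < 2) (hj : j < 2) : i ^^^ j = (i+j) % 2 := by
  interval_cases i <;> interval_cases j <;> decide

lemma xor_halves' (z q : ℕ) :
    z ^^^ q = 2*((z/2)^^^(q/2)) + ((z%2 + q%2) % 2) := by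
  have h := xor_two_mul_add' (z/2) (q/2) (z%2) (q%2) (Nat.mod_lt _ (by omega)) (Nat.mod_lt _ (by omega))
  rw [xor_bits' _ _ (Nat.mod_lt _ (by omega)) (Nat.mod_lt _ (by omega))] at h
  conv_lhs => rw [← Nat.div_add_mod z 2, ← Nat.div_add_mod q 2]
  exact h

lemma mul_halves' (K t : ℕ) : K*t = 2*(K*(t/2)) + K*(t%2) := by
  conv_lhs => rw [← Nat.div_add_mod t 2]
  ring

/-- key monotonicity: if ψ(z,q) ≥ -1 then ψ(z,p) ≥ k+1 for p < q, where k = 4m+3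
and ψ(z,q) = (z xor q) + z - k*q. This is where k ≡ 3 (mod 4) is essential. -/
lemma mono' (m : ℕ) : ∀ q z p : ℕ, p < q → (4*m+3)*q ≤ (z^^^q) + z + 1 →
    (4*m+3)*p + (4*m+4) ≤ (z^^^p) + z := by
  intro q
  induction q using Nat.strong_induction_on with
  | _ q IH =>
    intro z p hpq hq
    have e1 := xor_halves' z q
    have e2 := xor_halves' z p
    have mq := mul_halves' (4*m+3) q
    have mp := mul_halves' (4*m+3) p
    have pq2 : (4*m+3)*(q/2) = 2*((2*m+1)*(q/2)) + q/2 := by ring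
    rcases Nat.mod_two_eq_zero_or_one q with hc | hc <;>
      rcases Nat.mod_two_eq_zero_or_one p with hd | hd <;>
        rw [hc] at mq e1 <;> rw [hd] at mp e2 <;>
          simp only [Nat.mul_zero, Nat.mul_one, Nat.add_zero] at mq mp <;>
    (rcases Nat.lt_or_ge (p/2) (q/2) with h | h
     · have key := IH (q/2) (by omega) (z/2) (p/2) h (by omega)
       omega
     · have hpar : ((z/2) ^^^ (q/2)) % 2 = ((z/2) + (q/2)) % 2 := Nat.xor_mod_two_eq
       have hp2 : p/2 = q/2 := by omega
       have hpk : (4*m+3)*(p/2) = (4*m+3)*(q/2) := by rw [hp2]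
       rw [hp2] at e2
       omega)

/-- lifting a good pair by one binary digit of z -/
lemma lift' (m u z b : ℕ) (hb : b < 2)
    (h1 : (4*m+3)*(u^^^z) ≤ u+z) (h2 : u+z < (4*m+3)*(u^^^z) + (4*m+3)) :
    ∃ e < 2, (4*m+3)*((2*u+e)^^^(2*z+b)) ≤ (2*u+e)+(2*z+b) ∧
      (2*u+e)+(2*z+b) < (4*m+3)*((2*u+e)^^^(2*z+b)) + (4*m+3) := by
  have m1 : (4*m+3)*(2*(u^^^z)+1) = 2*((4*m+3)*(u^^^z)) + (4*m+3) := by ring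
  have m0 : (4*m+3)*(2*(u^^^z)+0) = 2*((4*m+3)*(u^^^z)) := by ring
  interval_cases b
  · by_cases hr : u + z ≤ (4*m+3)*(u^^^z) + 2*m+1
    · have e1 := xor_two_mul_add' u z 0 0 (by omega) (by omega)
      rw [show (0:ℕ)^^^0 = 0 from rfl] at e1
      exact ⟨0, by omega, by rw [e1]; omega, by rw [e1]; omega⟩
    · have e1 := xor_two_mul_add' u z 1 0 (by omega) (by omega)
      rw [show (1:ℕ)^^^0 = 1 from rfl] at e1
      exact ⟨1, by omega, by rw [e1]; omega, by rw [e1]; omega⟩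
  · by_cases hr : u + z ≤ (4*m+3)*(u^^^z) + 2*m
    · have e1 := xor_two_mul_add' u z 1 1 (by omega) (by omega)
      rw [show (1:ℕ)^^^1 = 0 from rfl] at e1
      exact ⟨1, by omega, by rw [e1]; omega, by rw [e1]; omega⟩
    · have e1 := xor_two_mul_add' u z 0 1 (by omega) (by omega)
      rw [show (0:ℕ)^^^1 = 1 from rfl] at e1
      exact ⟨0, by omega, by rw [e1]; omega, by rw [e1]; omega⟩

/-- existence of a good pair for every z -/
lemma exist' (m : ℕ) : ∀ z, ∃ u, (4*m+3)*(u^^^z) ≤ u+z ∧ u+z < (4*m+3)*(u^^^z)+(4*m+3) := by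
  intro z
  induction z using Nat.strong_induction_on with
  | _ z IH =>
    rcases Nat.eq_zero_or_pos z with rfl | hz
    · refine ⟨0, ?_, ?_⟩ <;> simp [Nat.xor_self] <;> omega
    · obtain ⟨u', h1, h2⟩ := IH (z/2) (by omega)
      obtain ⟨e, he, h3, h4⟩ := lift' m u' (z/2) (z%2) (by omega) h1 h2
      rw [← Nat.div_add_mod z 2]
      exact ⟨2*u'+e, h3, h4⟩

/-- from any strictly sub-regular pair, one coordinate can be decreased to a good pair -/
lemma key2' (m : ℕ) : ∀ s x z, x + z = s → x + z < (4*m+3)*(x^^^z) →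
    (∃ u < x, (4*m+3)*(u^^^z) ≤ u+z ∧ u+z < (4*m+3)*(u^^^z)+(4*m+3)) ∨
    (∃ w < z, (4*m+3)*(x^^^w) ≤ x+w ∧ x+w < (4*m+3)*(x^^^w)+(4*m+3)) := by
  intro s
  induction s using Nat.strong_induction_on with
  | _ s IH =>
    intro x z hs hlt
    obtain ⟨x', a, ha, rfl⟩ : ∃ x' a, a < 2 ∧ x = 2*x'+a := ⟨x/2, x%2, by omega, by omega⟩
    obtain ⟨z', b, hb, rfl⟩ : ∃ z' e, e < 2 ∧ z = 2*z'+e := ⟨z/2, z%2, by omega, by omega⟩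
    have e1 := xor_two_mul_add' x' z' a b ha hb
    have hz0 : ¬(x' = 0 ∧ a = 0 ∧ z' = 0 ∧ b = 0) := by
      rintro ⟨rfl, rfl, rfl, rfl⟩
      rw [show (2*0+0 : ℕ) = 0 from rfl, show (0:ℕ)^^^0 = 0 from rfl] at hlt
      omega
    by_cases h : x' + z' < (4*m+3)*(x'^^^z')
    · rcases IH (x'+z') (by omega) x' z' rfl h with ⟨u',hu',g1,g2⟩ | ⟨w',hw',g1,g2⟩
      · obtain ⟨e, he, h3, h4⟩ := lift' m u' z' b hb g1 g2
        exact Or.inl ⟨2*u'+e, by omega, h3, h4⟩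
      · rw [Nat.xor_comm x' w'] at g1 g2
        have g1' : (4*m+3)*(w'^^^x') ≤ w'+x' := by omega
        have g2' : w'+x' < (4*m+3)*(w'^^^x') + (4*m+3) := by omega
        obtain ⟨e, he, h3, h4⟩ := lift' m w' x' a ha g1' g2'
        rw [Nat.xor_comm (2*w'+e) (2*x'+a)] at h3 h4
        exact Or.inr ⟨2*w'+e, by omega, by omega, by omega⟩
    · push_neg at h
      have e0 := xor_two_mul_add' x' z' 0 0 (by omega) (by omega)
      rw [show (0:ℕ)^^^0 = 0 from rfl] at e0
      have m0 : (4*m+3)*(2*(x'^^^z')+0) = 2*((4*m+3)*(x'^^^z')) := by ring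
      have m1 : (4*m+3)*(2*(x'^^^z')+1) = 2*((4*m+3)*(x'^^^z')) + (4*m+3) := by ring
      interval_cases a <;> interval_cases b
      · rw [show (0:ℕ)^^^0 = 0 from rfl] at e1
        rw [e1] at hlt
        omega
      · rw [show (0:ℕ)^^^1 = 1 from rfl] at e1
        rw [e1] at hlt
        refine Or.inr ⟨2*z'+0, by omega, ?_, ?_⟩ <;> rw [e0] <;> omega
      · rw [show (1:ℕ)^^^0 = 1 from rfl] at e1
        rw [e1] at hlt
        refine Or.inl ⟨2*x'+0, by omega, ?_, ?_⟩ <;> rw [e0] <;> omega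
      · rw [show (1:ℕ)^^^1 = 0 from rfl] at e1
        rw [e1] at hlt
        omega

lemma mul_lt_cancel' (K a b : ℕ) (h : K*a < K*b) : a < b := by
  by_contra hc
  push_neg at hc
  have := Nat.mul_le_mul (Nat.le_refl K) hc
  omega

lemma mul_succ_le' (K a b : ℕ) (h : a < b) : K*a + K ≤ K*b := by
  calc K*a + K = K*(a+1) := by ring
  _ ≤ K*b := Nat.mul_le_mul (Nat.le_refl K) h

lemma div_eq_good' (K q s : ℕ) (h1 : K*q ≤ s) (h2 : s < K*q + K) : s / K = q := by
  apply Nat.div_eq_of_lt_le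
  · rw [Nat.mul_comm]; exact h1
  · rw [Nat.succ_mul, Nat.mul_comm]; omega

/-- monotonicity consequence: a good pair dominates every regular pair -/
lemma n1' (m u z x : ℕ) (g1 : (4*m+3)*(u^^^z) ≤ u+z) (g2 : u+z < (4*m+3)*(u^^^z)+(4*m+3))
    (hreg : (4*m+3)*(x^^^z) ≤ x+z) : x^^^z ≤ u^^^z := by
  by_contra hlt
  push_neg at hlt
  have hzx : z ^^^ (x ^^^ z) = x := by rw [Nat.xor_comm x z]; exact Nat.xor_xor_cancel_left z x
  have hzu : z ^^^ (u ^^^ z) = u := by rw [Nat.xor_comm u z]; exact Nat.xor_xor_cancel_left z u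
  have h := mono' m (x^^^z) z (u^^^z) hlt (by rw [hzx]; omega)
  rw [hzu] at h
  omega

lemma xor3_zero' (x z : ℕ) : x ^^^ (x^^^z) ^^^ z = 0 := by
  rw [Nat.xor_xor_cancel_left, Nat.xor_self]

lemma xor3_eq' (x y z : ℕ) (h : x^^^y^^^z = 0) : y = x^^^z ∧ x = y^^^z ∧ z = x^^^y := by
  have h1 : x^^^y = z := Nat.xor_eq_zero_iff.mp h
  refine ⟨?_, ?_, h1.symm⟩
  · rw [← h1, Nat.xor_xor_cancel_left]
  · rw [← h1, Nat.xor_comm x y, Nat.xor_xor_cancel_left]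

/-- from any position not in (multiplicative form of) A, there is a move into A -/
lemma toA' (m x y z : ℕ) (h : ¬((4*m+3)*y ≤ x+z ∧ x^^^y^^^z = 0)) :
    ∃ q ∈ movek (4*m+3) (x,y,z),
      (4*m+3)*q.2.1 ≤ q.1+q.2.2 ∧ q.1^^^q.2.1^^^q.2.2 = 0 := by
  by_cases hreg : (4*m+3)*y ≤ x+z
  · have hxor : x^^^y^^^z ≠ 0 := fun h0 => h ⟨hreg, h0⟩
    rcases Nat.xor_trichotomy hxor with h1 | h2 | h3
    · -- y ^^^ z < x
      by_cases h4 : (4*m+3)*y ≤ (y^^^z) + z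
      · refine ⟨(y^^^z, y, z), ?_, h4, ?_⟩
        · simp only [movek, Set.mem_setOf_eq]
          exact Or.inl ⟨y^^^z, h1, rfl⟩
        · show (y^^^z) ^^^ y ^^^ z = 0
          rw [Nat.xor_comm y z, Nat.xor_xor_cancel_right, Nat.xor_self]
      · push_neg at h4
        obtain ⟨u, g1, g2⟩ := exist' m z
        have hzu : z ^^^ (u^^^z) = u := by rw [Nat.xor_comm u z]; exact Nat.xor_xor_cancel_left z u
        have hp : u^^^z < y := by
          rcases Nat.lt_trichotomy (u^^^z) y with hlt | heq | hgt
          · exact hlt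
          · exfalso
            have hu : u = z^^^y := by rw [← heq, hzu]
            rw [heq] at g1
            rw [hu, Nat.xor_comm z y] at g1
            omega
          · exfalso
            have hm := mono' m (u^^^z) z y hgt (by rw [hzu]; omega)
            rw [Nat.xor_comm z y] at hm
            omega
        have hle := mul_succ_le' (4*m+3) (u^^^z) y hp
        have hu : u < x := by omega
        have hdiv : (u+z)/(4*m+3) = u^^^z := div_eq_good' _ _ _ g1 g2
        have hmin : min y ((u+z)/(4*m+3)) = u^^^z := by rw [hdiv]; exact min_eq_right hp.le
        refine ⟨(u, min y ((u+z)/(4*m+3)), z), ?_, ?_, ?_⟩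
        · simp only [movek, Set.mem_setOf_eq]
          exact Or.inr (Or.inr (Or.inr (Or.inl ⟨u, hu, rfl⟩)))
        · show (4*m+3) * (min y ((u+z)/(4*m+3))) ≤ u+z
          rw [hmin]; exact g1
        · show u ^^^ (min y ((u+z)/(4*m+3))) ^^^ z = 0
          rw [hmin]; exact xor3_zero' u z
    · -- z ^^^ x < y
      rw [Nat.xor_comm z x] at h2
      have hle := mul_succ_le' (4*m+3) (x^^^z) y h2
      refine ⟨(x, x^^^z, z), ?_, ?_, ?_⟩
      · simp only [movek, Set.mem_setOf_eq]
        exact Or.inr (Or.inl ⟨x^^^z, h2, rfl⟩)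
      · show (4*m+3)*(x^^^z) ≤ x+z
        omega
      · show x ^^^ (x^^^z) ^^^ z = 0
        exact xor3_zero' x z
    · -- x ^^^ y < z
      by_cases h4 : (4*m+3)*y ≤ x + (x^^^y)
      · refine ⟨(x, y, x^^^y), ?_, h4, ?_⟩
        · simp only [movek, Set.mem_setOf_eq]
          exact Or.inr (Or.inr (Or.inl ⟨x^^^y, h3, rfl⟩))
        · show (x ^^^ y) ^^^ (x^^^y) = 0
          exact Nat.xor_self _
      · push_neg at h4
        obtain ⟨w, g1, g2⟩ := exist' m x
        rw [Nat.xor_comm w x] at g1 g2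
        have g1' : (4*m+3)*(x^^^w) ≤ x+w := by omega
        have g2' : x+w < (4*m+3)*(x^^^w) + (4*m+3) := by omega
        have hxw : x ^^^ (x^^^w) = w := Nat.xor_xor_cancel_left x w
        have hp : x^^^w < y := by
          rcases Nat.lt_trichotomy (x^^^w) y with hlt | heq | hgt
          · exact hlt
          · exfalso
            have hw : w = x^^^y := by rw [← heq, hxw]
            rw [heq] at g1'
            rw [hw] at g1'
            omega
          · exfalso
            have hm := mono' m (x^^^w) x y hgt (by rw [hxw]; omega)
            omega
        have hle := mul_succ_le' (4*m+3) (x^^^w) y hp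
        have hw : w < z := by omega
        have hdiv : (x+w)/(4*m+3) = x^^^w := div_eq_good' _ _ _ g1' g2'
        have hmin : min y ((x+w)/(4*m+3)) = x^^^w := by rw [hdiv]; exact min_eq_right hp.le
        refine ⟨(x, min y ((x+w)/(4*m+3)), w), ?_, ?_, ?_⟩
        · simp only [movek, Set.mem_setOf_eq]
          exact Or.inr (Or.inr (Or.inr (Or.inr ⟨w, hw, rfl⟩)))
        · show (4*m+3) * (min y ((x+w)/(4*m+3))) ≤ x+w
          rw [hmin]; exact g1'
        · show x ^^^ (min y ((x+w)/(4*m+3))) ^^^ w = 0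
          rw [hmin, hxw, Nat.xor_self]
  · push_neg at hreg
    by_cases hr : (4*m+3)*(x^^^z) ≤ x+z
    · have hlt : x^^^z < y := mul_lt_cancel' (4*m+3) _ _ (by omega)
      refine ⟨(x, x^^^z, z), ?_, ?_, ?_⟩
      · simp only [movek, Set.mem_setOf_eq]
        exact Or.inr (Or.inl ⟨x^^^z, hlt, rfl⟩)
      · show (4*m+3)*(x^^^z) ≤ x+z
        exact hr
      · show x ^^^ (x^^^z) ^^^ z = 0
        exact xor3_zero' x z
    · push_neg at hr
      rcases key2' m (x+z) x z rfl hr with ⟨u, hu, g1, g2⟩ | ⟨w, hw, g1, g2⟩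
      · have hp : u^^^z < y := mul_lt_cancel' (4*m+3) _ _ (by omega)
        have hdiv : (u+z)/(4*m+3) = u^^^z := div_eq_good' _ _ _ g1 g2
        have hmin : min y ((u+z)/(4*m+3)) = u^^^z := by rw [hdiv]; exact min_eq_right hp.le
        refine ⟨(u, min y ((u+z)/(4*m+3)), z), ?_, ?_, ?_⟩
        · simp only [movek, Set.mem_setOf_eq]
          exact Or.inr (Or.inr (Or.inr (Or.inl ⟨u, hu, rfl⟩)))
        · show (4*m+3) * (min y ((u+z)/(4*m+3))) ≤ u+z
          rw [hmin]; exact g1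
        · show u ^^^ (min y ((u+z)/(4*m+3))) ^^^ z = 0
          rw [hmin]; exact xor3_zero' u z
      · have hp : x^^^w < y := mul_lt_cancel' (4*m+3) _ _ (by omega)
        have hdiv : (x+w)/(4*m+3) = x^^^w := div_eq_good' _ _ _ g1 g2
        have hmin : min y ((x+w)/(4*m+3)) = x^^^w := by rw [hdiv]; exact min_eq_right hp.le
        refine ⟨(x, min y ((x+w)/(4*m+3)), w), ?_, ?_, ?_⟩
        · simp only [movek, Set.mem_setOf_eq]
          exact Or.inr (Or.inr (Or.inr (Or.inr ⟨w, hw, rfl⟩)))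
        · show (4*m+3) * (min y ((x+w)/(4*m+3))) ≤ x+w
          rw [hmin]; exact g1
        · show x ^^^ (min y ((x+w)/(4*m+3))) ^^^ w = 0
          rw [hmin, Nat.xor_xor_cancel_left, Nat.xor_self]

/-- every move from an A-position leaves A -/
lemma closure' (m x y z : ℕ) (hreg : (4*m+3)*y ≤ x+z) (hxor : x^^^y^^^z = 0) :
    ∀ q ∈ movek (4*m+3) (x,y,z), ¬((4*m+3)*q.2.1 ≤ q.1+q.2.2 ∧ q.1^^^q.2.1^^^q.2.2 = 0) := by
  obtain ⟨hy, hx, hz⟩ := xor3_eq' x y z hxor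
  intro q hq
  simp only [movek, Set.mem_setOf_eq] at hq
  rcases hq with ⟨u, hu, rfl⟩ | ⟨v, hv, rfl⟩ | ⟨w, hw, rfl⟩ | ⟨u, hu, rfl⟩ | ⟨w, hw, rfl⟩ <;>
    rintro ⟨hA1, hA2⟩ <;> dsimp only at hA1 hA2
  · -- (u, y, z)
    obtain ⟨-, hx', -⟩ := xor3_eq' u y z hA2
    rw [hx'] at hu
    omega
  · -- (x, v, z)
    obtain ⟨hy', -, -⟩ := xor3_eq' x v z hA2
    rw [hy', ← hy] at hv
    omega
  · -- (x, y, w)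
    obtain ⟨-, -, hz'⟩ := xor3_eq' x y w hA2
    rw [hz', ← hz] at hw
    omega
  · -- (u, min y ((u+z)/k), z)
    by_cases hcase : y ≤ (u+z)/(4*m+3)
    · have hmin : min y ((u+z)/(4*m+3)) = y := min_eq_left hcase
      rw [hmin] at hA2
      obtain ⟨-, hx', -⟩ := xor3_eq' u y z hA2
      rw [hx'] at hu
      omega
    · push_neg at hcase
      have hmin : min y ((u+z)/(4*m+3)) = (u+z)/(4*m+3) := min_eq_right hcase.le
      rw [hmin] at hA1 hA2
      obtain ⟨hd', -, -⟩ := xor3_eq' u ((u+z)/(4*m+3)) z hA2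
      have hmod := Nat.div_add_mod (u+z) (4*m+3)
      have hmlt : (u+z) % (4*m+3) < 4*m+3 := Nat.mod_lt _ (by omega)
      rw [hd'] at hmod hA1 hcase
      have hn := n1' m u z x hA1 (by omega) (by rw [← hy]; exact hreg)
      omega
  · -- (x, min y ((x+w)/k), w)
    by_cases hcase : y ≤ (x+w)/(4*m+3)
    · have hmin : min y ((x+w)/(4*m+3)) = y := min_eq_left hcase
      rw [hmin] at hA2
      obtain ⟨-, -, hz'⟩ := xor3_eq' x y w hA2
      rw [hz', ← hz] at hw
      omega
    · push_neg at hcase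
      have hmin : min y ((x+w)/(4*m+3)) = (x+w)/(4*m+3) := min_eq_right hcase.le
      rw [hmin] at hA1 hA2
      obtain ⟨hd', -, -⟩ := xor3_eq' x ((x+w)/(4*m+3)) w hA2
      have hmod := Nat.div_add_mod (x+w) (4*m+3)
      have hmlt : (x+w) % (4*m+3) < 4*m+3 := Nat.mod_lt _ (by omega)
      rw [hd'] at hmod hA1 hcase
      have g1 : (4*m+3)*(w^^^x) ≤ w+x := by rw [Nat.xor_comm w x]; omega
      have g2 : w+x < (4*m+3)*(w^^^x) + (4*m+3) := by rw [Nat.xor_comm w x]; omega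
      have hreg' : (4*m+3)*(z^^^x) ≤ z+x := by rw [Nat.xor_comm z x, ← hy]; omega
      have hn := n1' m w x z g1 g2 hreg'
      rw [Nat.xor_comm z x, Nat.xor_comm w x] at hn
      omega

/-- the characterization of P-positions, multiplicative form -/
lemma char' (m : ℕ) : ∀ n (p : ℕ × ℕ × ℕ), p.1 + p.2.1 + p.2.2 ≤ n →
    (PPosition (4*m+3) p ↔
      ((4*m+3) * p.2.1 ≤ p.1 + p.2.2 ∧ p.1 ^^^ p.2.1 ^^^ p.2.2 = 0)) := by
  intro n
  induction n using Nat.strong_induction_on with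
  | _ n IH =>
    rintro ⟨x, y, z⟩ hn
    dsimp only at hn ⊢
    constructor
    · intro hP
      by_contra hnot
      obtain ⟨q, hq, hA⟩ := toA' m x y z hnot
      have hqs := movek_sum_lt (4*m+3) (x,y,z) q hq
      dsimp only at hqs
      have hPq : PPosition (4*m+3) q :=
        (IH (q.1+q.2.1+q.2.2) (by omega) q le_rfl).mpr hA
      rw [PP_iff'] at hP
      exact hP q hq hPq
    · rintro ⟨hreg, hxor⟩
      rw [PP_iff']
      intro q hq hPq
      have hqs := movek_sum_lt (4*m+3) (x,y,z) q hq
      dsimp only at hqs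
      have := (IH (q.1+q.2.1+q.2.2) (by omega) q le_rfl).mp hPq
      exact closure' m x y z hreg hxor q hq this

theorem stmt16 (m k : ℕ) (hk : k = 4 * m + 3) :
    (∀ x y z : ℕ, y ≤ (x + z) / k → (PPosition k (x, y, z) ↔ x ^^^ y ^^^ z = 0)) ∧
    Ak k = {p | p.2.1 ≤ (p.1 + p.2.2) / k ∧ PPosition k p} ∧
    Bk k = {p | p.2.1 ≤ (p.1 + p.2.2) / k ∧ ¬ PPosition k p} := by
  subst hk
  have hk0 : 0 < 4*m+3 := by omega
  have hchar : ∀ p : ℕ × ℕ × ℕ, PPosition (4*m+3) p ↔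
      ((4*m+3) * p.2.1 ≤ p.1 + p.2.2 ∧ p.1 ^^^ p.2.1 ^^^ p.2.2 = 0) :=
    fun p => char' m (p.1+p.2.1+p.2.2) p le_rfl
  have hdiv : ∀ y s : ℕ, y ≤ s / (4*m+3) ↔ (4*m+3)*y ≤ s := by
    intro y s
    rw [Nat.le_div_iff_mul_le hk0, Nat.mul_comm]
  refine ⟨?_, ?_, ?_⟩
  · intro x y z hy
    rw [hchar (x,y,z)]
    have hy' := (hdiv y (x+z)).mp hy
    exact ⟨fun h => h.2, fun h => ⟨hy', h⟩⟩
  · ext ⟨x, y, z⟩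
    simp only [Ak, Set.mem_setOf_eq]
    constructor
    · rintro ⟨h1, h2⟩
      exact ⟨h1, (hchar (x,y,z)).mpr ⟨(hdiv _ _).mp h1, h2⟩⟩
    · rintro ⟨h1, h2⟩
      exact ⟨h1, ((hchar (x,y,z)).mp h2).2⟩
  · ext ⟨x, y, z⟩
    simp only [Bk, Set.mem_setOf_eq]
    constructor
    · rintro ⟨h1, h2⟩
      exact ⟨h1, fun hP => h2 ((hchar (x,y,z)).mp hP).2⟩
    · rintro ⟨h1, h2⟩
      exact ⟨h1, fun h0 => h2 ((hchar (x,y,z)).mpr ⟨(hdiv _ _).mp h1, h0⟩)⟩
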